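/- arXiv:2503.04577 — 2 statements merged into one kernel-verified Lean document; each statement's English description precedes it below -/
import Mathlib

section
/- For all vectors a, b in R^n and all p ≥ 2, one has ⟨‖a‖^{p−2}a − ‖b‖^{p−2}b, a−b⟩ ≥ (1/2)^{p−2}‖a−b‖^p. -/
open Real Set

lemma my_superadd {x y s : ℝ} (hx : 0 ≤ x) (hy : 0 ≤ y) (hs : 1 ≤ s) :
    x ^ s + y ^ s ≤ (x + y) ^ s := by
  have h := NNReal.add_rpow_le_rpow_add (x.toNNReal) (y.toNNReal) hs
  have := NNReal.coe_le_coe.mpr h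
  push_cast [NNReal.coe_rpow, Real.coe_toNNReal _ hx, Real.coe_toNNReal _ hy,
    Real.coe_toNNReal _ (add_nonneg hx hy)] at this
  simpa using this

lemma my_mid {A B s : ℝ} (hA : 0 ≤ A) (hB : 0 ≤ B) (hs : 1 ≤ s) :
    ((A + B) / 2) ^ s ≤ (A ^ s + B ^ s) / 2 := by
  have h := (convexOn_rpow hs).2 (mem_Ici.mpr hA) (mem_Ici.mpr hB)
    (by norm_num : (0:ℝ) ≤ 1/2) (by norm_num : (0:ℝ) ≤ 1/2) (by norm_num)
  simp only [smul_eq_mul] at h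
  calc ((A + B)/2) ^ s = (1/2 * A + 1/2 * B) ^ s := by ring_nf
    _ ≤ 1/2 * A ^ s + 1/2 * B ^ s := h
    _ = (A ^ s + B ^ s) / 2 := by ring

lemma my_rpow_succ {x q : ℝ} (hx : 0 ≤ x) (hq : 0 ≤ q) : x ^ (q + 1) = x ^ q * x := by
  rcases eq_or_lt_of_le hx with h | h
  · rw [← h, Real.zero_rpow (by positivity)]; ring
  · rw [Real.rpow_add_one (ne_of_gt h)]

lemma my_pow_eq {X q : ℝ} (hX : 0 ≤ X) (hq : 0 ≤ q) :
    (X ^ 2) ^ ((q + 2) / 2) = X ^ q * X ^ 2 := by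
  rcases eq_or_lt_of_le hX with h | h
  · rw [← h]
    have h2 : ((q + 2) / 2 : ℝ) ≠ 0 := (by linarith : (0:ℝ) < (q+2)/2).ne'
    simp [Real.zero_rpow h2]
  · rw [← Real.rpow_two X, ← Real.rpow_mul hX,
      show (2:ℝ) * ((q + 2) / 2) = q + 2 by ring,
      Real.rpow_add h, Real.rpow_two]

lemma my_half_le_one {q : ℝ} (hq : 0 ≤ q) : (1/2:ℝ) ^ q ≤ 1 :=
  Real.rpow_le_one (by norm_num) (by norm_num) hq

-- endpoint t = A*B (C = A - B), assuming B ≤ A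
lemma my_ep1 {A B q : ℝ} (hB : 0 ≤ B) (hBA : B ≤ A) (hq : 0 ≤ q) :
    (1/2:ℝ) ^ q * ((A - B) ^ 2) ^ ((q + 2) / 2) ≤ (A - B) * (A ^ q * A - B ^ q * B) := by
  have hd : 0 ≤ A - B := by linarith
  have hA : 0 ≤ A := le_trans hB hBA
  rw [my_pow_eq hd hq]
  have h1 : (A - B) ^ q * (A - B) ≤ A ^ q * A - B ^ q * B := by
    have h := my_superadd (x := A - B) (y := B) (s := q + 1) hd hB (by linarith)
    rw [my_rpow_succ hd hq, my_rpow_succ hB hq,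
      show A - B + B = A by ring, my_rpow_succ hA hq] at h
    linarith
  calc (1/2:ℝ) ^ q * ((A-B) ^ q * (A-B)^2) ≤ 1 * ((A-B) ^ q * (A-B)^2) := by
        apply mul_le_mul_of_nonneg_right (my_half_le_one hq) (by positivity)
    _ = (A - B) * ((A - B) ^ q * (A - B)) := by ring
    _ ≤ (A - B) * (A ^ q * A - B ^ q * B) := mul_le_mul_of_nonneg_left h1 hd

-- endpoint t = -A*B (C = A + B)
lemma my_ep2 {A B q : ℝ} (hA : 0 ≤ A) (hB : 0 ≤ B) (hq : 0 ≤ q) :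
    (1/2:ℝ) ^ q * ((A + B) ^ 2) ^ ((q + 2) / 2) ≤ (A + B) * (A ^ q * A + B ^ q * B) := by
  have hS : 0 ≤ A + B := by linarith
  rw [my_pow_eq hS hq]
  have h := my_mid (A := A) (B := B) (s := q + 1) hA hB (by linarith)
  have hhalf : ((A + B)/2) ^ (q + 1) = (1/2:ℝ) ^ q * (A + B) ^ q * ((A + B) / 2) := by
    rw [show (A + B)/2 = (1/2) * (A + B) by ring, Real.mul_rpow (by norm_num) hS,
      my_rpow_succ (by norm_num : (0:ℝ) ≤ 1/2) hq, my_rpow_succ hS hq]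
    ring
  rw [hhalf, my_rpow_succ hA hq, my_rpow_succ hB hq] at h
  nlinarith [h, hS, sq_nonneg (A + B)]

-- the scalar key inequality
lemma my_key {A B t q : ℝ} (hA : 0 ≤ A) (hB : 0 ≤ B) (hq : 0 ≤ q) (ht : |t| ≤ A * B) :
    (1/2:ℝ) ^ q * (A ^ 2 + B ^ 2 - 2 * t) ^ ((q + 2) / 2)
      ≤ (A ^ q * A ^ 2 + B ^ q * B ^ 2) - (A ^ q + B ^ q) * t := by
  -- wlog B ≤ A
  wlog hBA : B ≤ A generalizing A B with H
  · have h2 := H hB hA (by rwa [mul_comm]) (le_of_not_ge hBA)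
    have e : B ^ 2 + A ^ 2 - 2 * t = A ^ 2 + B ^ 2 - 2 * t := by ring
    rw [e] at h2
    linarith
  rcases eq_or_lt_of_le (mul_nonneg hA hB) with hAB | hAB
  · -- A*B = 0, hence t = 0, and B = 0 (since B ≤ A; if A = 0 then B = 0 too)
    have ht0 : t = 0 := by
      have : |t| ≤ 0 := by rw [← hAB] at ht; exact ht
      simpa using le_antisymm this (abs_nonneg t)
    have hB0 : B = 0 := by
      rcases mul_eq_zero.mp hAB.symm with h | h
      · linarith
      · exact h
    subst ht0 hB0
    have this := my_ep1 (A := A) (B := 0) le_rfl hBA hq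
    simp only [sub_zero] at this
    calc (1/2:ℝ)^q * (A^2 + 0^2 - 2*0)^((q+2)/2)
        = (1/2:ℝ)^q * (A^2)^((q+2)/2) := by norm_num
      _ ≤ A * (A^q * A - 0^q*0) := this
      _ = A^q*A^2 + 0^q*0^2 - (A^q + 0^q)*0 := by ring
  · -- main case: A*B > 0; use convexity in t
    set s : ℝ := (q + 2) / 2 with hs
    have hs1 : 1 ≤ s := by rw [hs]; linarith
    set lam : ℝ := (A*B + t) / (2*(A*B)) with hlam
    set mu : ℝ := (A*B - t) / (2*(A*B)) with hmu
    have habs := abs_le.mp ht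
    have hlam0 : 0 ≤ lam := by
      apply div_nonneg (by linarith [habs.1]) (by linarith)
    have hmu0 : 0 ≤ mu := by
      apply div_nonneg (by linarith [habs.2]) (by linarith)
    have hABne : A * B ≠ 0 := ne_of_gt hAB
    have hsum : lam + mu = 1 := by rw [hlam, hmu]; field_simp [left_ne_zero_of_mul hABne, right_ne_zero_of_mul hABne]; ring
    have hcomb : A ^ 2 + B ^ 2 - 2 * t = lam * (A - B)^2 + mu * (A + B)^2 := by
      rw [hlam, hmu]; field_simp [left_ne_zero_of_mul hABne, right_ne_zero_of_mul hABne]; ring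
    have hcvx := (convexOn_rpow hs1).2 (mem_Ici.mpr (sq_nonneg (A - B)))
      (mem_Ici.mpr (sq_nonneg (A + B))) hlam0 hmu0 hsum
    simp only [smul_eq_mul] at hcvx
    have e1 := my_ep1 (A := A) (B := B) hB hBA hq
    have e2 := my_ep2 (A := A) (B := B) hA hB hq
    calc (1/2:ℝ)^q * (A^2 + B^2 - 2*t)^s
        = (1/2:ℝ)^q * (lam * (A-B)^2 + mu * (A+B)^2)^s := by rw [hcomb]
      _ ≤ (1/2:ℝ)^q * (lam * ((A-B)^2)^s + mu * ((A+B)^2)^s) := by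
          apply mul_le_mul_of_nonneg_left hcvx (by positivity)
      _ = lam * ((1/2:ℝ)^q * ((A-B)^2)^s) + mu * ((1/2:ℝ)^q * ((A+B)^2)^s) := by ring
      _ ≤ lam * ((A-B) * (A^q*A - B^q*B)) + mu * ((A+B) * (A^q*A + B^q*B)) := by
          gcongr
      _ = (A^q*A^2 + B^q*B^2) - (A^q + B^q)*t := by
          rw [hlam, hmu]; field_simp [left_ne_zero_of_mul hABne, right_ne_zero_of_mul hABne]; ring

lemma my_rpow_sq {X p : ℝ} (hX : 0 ≤ X) (hp : 0 < p) : X ^ p = (X ^ 2) ^ (p / 2) := by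
  rcases eq_or_lt_of_le hX with h | h
  · rw [← h, Real.zero_rpow hp.ne']
    simp [Real.zero_rpow (by positivity : (0:ℝ) < p/2).ne']
  · rw [← Real.rpow_two X, ← Real.rpow_mul h.le, show (2:ℝ) * (p/2) = p by ring]

theorem basic_inequality_I_c (n : ℕ) (a b : EuclideanSpace ℝ (Fin n)) (p : ℝ)
    (hp : 2 ≤ p) :
    (inner ℝ (‖a‖ ^ (p - 2) • a - ‖b‖ ^ (p - 2) • b) (a - b) : ℝ)
      ≥ (1 / 2 : ℝ) ^ (p - 2) * ‖a - b‖ ^ p := by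
  set q : ℝ := p - 2 with hqdef
  have hq : 0 ≤ q := by simp [hqdef]; linarith
  have hp2 : p = q + 2 := by rw [hqdef]; ring
  set t : ℝ := inner ℝ a b with htdef
  have ht : |t| ≤ ‖a‖ * ‖b‖ := abs_real_inner_le_norm a b
  have hexp : (inner ℝ (‖a‖ ^ q • a - ‖b‖ ^ q • b) (a - b) : ℝ)
      = (‖a‖ ^ q * ‖a‖ ^ 2 + ‖b‖ ^ q * ‖b‖ ^ 2) - (‖a‖ ^ q + ‖b‖ ^ q) * t := by
    simp only [inner_sub_left, inner_sub_right, real_inner_smul_left,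
      real_inner_self_eq_norm_sq, ← htdef]
    have hba : (inner ℝ b a : ℝ) = t := (real_inner_comm a b).trans htdef.symm
    rw [hba]
    ring
  have hC : ‖a - b‖ ^ p = (‖a‖ ^ 2 + ‖b‖ ^ 2 - 2 * t) ^ ((q + 2) / 2) := by
    rw [my_rpow_sq (norm_nonneg (a - b)) (by linarith : (0:ℝ) < p),
      norm_sub_sq_real, hp2]
    ring_nf
    rw [htdef]; ring_nf
  rw [ge_iff_le, hexp, hC]
  exact my_key (norm_nonneg a) (norm_nonneg b) hq ht
end

section
/- Let p > 1, φ: R^n → R ∪ {+∞} a proper lower semicontinuous function, and x̄ ∈ dom φ. If x̄ ∈ prox_{γ̂,p}φ(x̄) for some γ̂ > 0 (i.e., x̄ is a proximal fixed point), then for each γ ∈ (0, γ̂), prox_{γ,p}φ(x̄) = {x̄}, that is, x̄ is the unique minimizer of y ↦ φ(y) + (1/(pγ))‖x̄−y‖^p. -/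
theorem prox_fixed_point_implies_prox_singleton (n : ℕ)
    (φ : EuclideanSpace ℝ (Fin n) → EReal) (p γhat : ℝ)
    (xbar : EuclideanSpace ℝ (Fin n)) (hp : 1 < p)
    (hbot : ∀ x, φ x ≠ ⊥) (hlsc : LowerSemicontinuous φ)
    (hdom : φ xbar ≠ ⊤) (hγhat : 0 < γhat)
    (hfix : ∀ z, φ xbar + ((1 / (p * γhat) * ‖xbar - xbar‖ ^ p : ℝ) : EReal)
        ≤ φ z + ((1 / (p * γhat) * ‖xbar - z‖ ^ p : ℝ) : EReal)) :
    ∀ γ : ℝ, 0 < γ → γ < γhat →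
      {y | ∀ z, φ y + ((1 / (p * γ) * ‖xbar - y‖ ^ p : ℝ) : EReal)
          ≤ φ z + ((1 / (p * γ) * ‖xbar - z‖ ^ p : ℝ) : EReal)} = {xbar} := by
  intro γ hγ hγγ
  have hp0 : (0 : ℝ) < p := lt_trans one_pos hp
  have hnn : ‖xbar - xbar‖ = 0 := by simp
  have hz0 : (‖xbar - xbar‖ ^ p : ℝ) = 0 := by
    rw [hnn, Real.zero_rpow (ne_of_gt hp0)]
  have hc : 1 / (p * γhat) < 1 / (p * γ) := by
    apply one_div_lt_one_div_of_lt (by positivity)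
    exact mul_lt_mul_of_pos_left hγγ hp0
  ext y
  simp only [Set.mem_setOf_eq, Set.mem_singleton_iff]
  constructor
  · intro hy
    set t : ℝ := ‖xbar - y‖ ^ p with ht
    have ht0 : 0 ≤ t := Real.rpow_nonneg (norm_nonneg _) p
    have h1 : φ y + ((1 / (p * γ) * t : ℝ) : EReal) ≤ φ xbar := by
      have := hy xbar
      rwa [hz0, mul_zero, EReal.coe_zero, add_zero] at this
    have h2 : φ xbar ≤ φ y + ((1 / (p * γhat) * t : ℝ) : EReal) := by
      have := hfix y
      rwa [hz0, mul_zero, EReal.coe_zero, add_zero] at this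
    have hytop : φ y ≠ ⊤ := by
      intro h
      rw [h] at h1
      rw [EReal.top_add_of_ne_bot (EReal.coe_ne_bot _)] at h1
      exact hdom (top_le_iff.mp h1)
    lift φ y to ℝ using ⟨hytop, hbot y⟩ with a ha
    have h3 : ((a + 1 / (p * γ) * t : ℝ) : EReal) ≤ ((a + 1 / (p * γhat) * t : ℝ) : EReal) := by
      push_cast
      exact le_trans h1 h2
    rw [EReal.coe_le_coe_iff] at h3
    have htz : t = 0 := by nlinarith
    have : ‖xbar - y‖ = 0 := by
      rcases (Real.rpow_eq_zero (norm_nonneg _) (ne_of_gt hp0)).mp htz with h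
      exact h
    have : xbar = y := by rwa [norm_sub_eq_zero_iff] at this
    exact this.symm
  · intro h z
    subst h
    rw [hz0, mul_zero]
    have step1 : φ y + ((0 : ℝ) : EReal) ≤ φ z + ((1 / (p * γhat) * ‖y - z‖ ^ p : ℝ) : EReal) := by
      have := hfix z
      rwa [hz0, mul_zero] at this
    refine le_trans step1 (add_le_add_right (EReal.coe_le_coe_iff.mpr ?_) _)
    have := Real.rpow_nonneg (norm_nonneg (y - z)) p
    nlinarith
end
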